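/- Let A₁ be an n×m matrix and A₂ a p×q matrix over a commutative ring, and let A be the block diagonal matrix diag(A₁, A₂) of size (n+p)×(m+q). Then the ideal generated by the (m+q−1)-minors of A equals the sum of the ideal (generated by products of ((m−1)-minors of A₁ with q-minors of A₂)) and the ideal (generated by products of (m-minors of A₁ with (q−1)-minors of A₂)). -/

import Mathlib

/-- The ideal generated by the `s`-minors of a matrix: minors of order larger
than the size are taken to be `0` (no such minors exist), and `0`-minors are
taken to be `1` (the determinant of the empty matrix). -/
def minorsIdeal {R : Type} [CommRing R] {ι κ : Type} [Fintype ι] [Fintype κ]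
    (A : Matrix ι κ R) (s : ℕ) : Ideal R :=
  Ideal.span {x | ∃ (f : Fin s → ι) (g : Fin s → κ),
    Function.Injective f ∧ Function.Injective g ∧ x = (A.submatrix f g).det}

open Matrix Finset Function

namespace MinorsProof

variable {R : Type} [CommRing R]

lemma mem_minorsIdeal {ι κ : Type} [Fintype ι] [Fintype κ] (A : Matrix ι κ R) {s : ℕ}
    {f : Fin s → ι} {g : Fin s → κ} (hf : Injective f) (hg : Injective g) :
    (A.submatrix f g).det ∈ minorsIdeal A s :=
  Ideal.subset_span ⟨f, g, hf, hg, rfl⟩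

lemma succ_le {ι κ : Type} [Fintype ι] [Fintype κ] (A : Matrix ι κ R) (k : ℕ) :
    minorsIdeal A (k + 1) ≤ minorsIdeal A k := by
  rw [show minorsIdeal A (k+1) = Ideal.span {x | ∃ (f : Fin (k+1) → ι) (g : Fin (k+1) → κ),
    Function.Injective f ∧ Function.Injective g ∧ x = (A.submatrix f g).det} from rfl,
    Ideal.span_le]
  rintro x ⟨f, g, hf, hg, rfl⟩
  rw [Matrix.det_succ_row_zero]
  refine Ideal.sum_mem _ fun j _ => Ideal.mul_mem_left _ _ ?_
  rw [Matrix.submatrix_submatrix]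
  exact mem_minorsIdeal A (hf.comp (Fin.succ_injective k))
    (hg.comp Fin.succAbove_right_injective)

lemma anti {ι κ : Type} [Fintype ι] [Fintype κ] (A : Matrix ι κ R) {j k : ℕ} (h : j ≤ k) :
    minorsIdeal A k ≤ minorsIdeal A j := by
  induction h with
  | refl => exact le_rfl
  | step _ ih => exact le_trans (succ_le A _) ih

variable {n m p q : ℕ}

lemma embed_left (A₁ : Matrix (Fin n) (Fin m) R) (A₂ : Matrix (Fin p) (Fin q) R) (k : ℕ) :
    minorsIdeal A₁ k ≤ minorsIdeal (fromBlocks A₁ 0 0 A₂) k := by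
  rw [show minorsIdeal A₁ k = Ideal.span {x | ∃ (f : Fin k → Fin n) (g : Fin k → Fin m),
    Function.Injective f ∧ Function.Injective g ∧ x = (A₁.submatrix f g).det} from rfl,
    Ideal.span_le]
  rintro x ⟨f, g, hf, hg, rfl⟩
  have : A₁.submatrix f g
      = (fromBlocks A₁ 0 0 A₂).submatrix (Sum.inl ∘ f) (Sum.inl ∘ g) := by
    ext i j; rfl
  rw [this]
  exact mem_minorsIdeal _ (Sum.inl_injective.comp hf) (Sum.inl_injective.comp hg)

lemma embed_right (A₁ : Matrix (Fin n) (Fin m) R) (A₂ : Matrix (Fin p) (Fin q) R) (k : ℕ) :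
    minorsIdeal A₂ k ≤ minorsIdeal (fromBlocks A₁ 0 0 A₂) k := by
  rw [show minorsIdeal A₂ k = Ideal.span {x | ∃ (f : Fin k → Fin p) (g : Fin k → Fin q),
    Function.Injective f ∧ Function.Injective g ∧ x = (A₂.submatrix f g).det} from rfl,
    Ideal.span_le]
  rintro x ⟨f, g, hf, hg, rfl⟩
  have : A₂.submatrix f g
      = (fromBlocks A₁ 0 0 A₂).submatrix (Sum.inr ∘ f) (Sum.inr ∘ g) := by
    ext i j; rfl
  rw [this]
  exact mem_minorsIdeal _ (Sum.inr_injective.comp hf) (Sum.inr_injective.comp hg)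

lemma prod_mem (A₁ : Matrix (Fin n) (Fin m) R) (A₂ : Matrix (Fin p) (Fin q) R)
    {a b : ℕ} {f₁ : Fin a → Fin n} {g₁ : Fin a → Fin m}
    {f₂ : Fin b → Fin p} {g₂ : Fin b → Fin q}
    (hf₁ : Injective f₁) (hg₁ : Injective g₁) (hf₂ : Injective f₂) (hg₂ : Injective g₂) :
    (A₁.submatrix f₁ g₁).det * (A₂.submatrix f₂ g₂).det ∈
      minorsIdeal (fromBlocks A₁ 0 0 A₂) (a + b) := by
  classical
  set e : Fin (a + b) ≃ Fin a ⊕ Fin b := finSumFinEquiv.symm with he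
  have key : (fromBlocks A₁ 0 0 A₂).submatrix (Sum.map f₁ f₂ ∘ e) (Sum.map g₁ g₂ ∘ e)
      = (fromBlocks (A₁.submatrix f₁ g₁) 0 0 (A₂.submatrix f₂ g₂)).submatrix e e := by
    ext i j
    rcases hi : e i with i' | i' <;> rcases hj : e j with j' | j' <;>
      simp [Matrix.submatrix_apply, hi, hj]
  have hdet : ((fromBlocks A₁ 0 0 A₂).submatrix (Sum.map f₁ f₂ ∘ e) (Sum.map g₁ g₂ ∘ e)).det
      = (A₁.submatrix f₁ g₁).det * (A₂.submatrix f₂ g₂).det := by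
    rw [key, Matrix.det_submatrix_equiv_self, Matrix.det_fromBlocks_zero₂₁]
  rw [← hdet]
  exact mem_minorsIdeal _ ((hf₁.sumMap hf₂).comp e.injective)
    ((hg₁.sumMap hg₂).comp e.injective)

lemma split_equiv {s a b : ℕ} (pr : Fin s → Prop) [DecidablePred pr]
    (ha : (univ.filter pr).card = a) (hb : (univ.filter fun i => ¬ pr i).card = b) :
    ∃ E : Fin a ⊕ Fin b ≃ Fin s,
      (∀ x, pr (E (Sum.inl x))) ∧ ∀ y, ¬ pr (E (Sum.inr y)) := by
  have h1 : Fintype.card {i // pr i} = a := by rw [Fintype.card_subtype]; exact ha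
  have h2 : Fintype.card {i // ¬ pr i} = b := by rw [Fintype.card_subtype]; exact hb
  refine ⟨(Equiv.sumCongr (Fintype.equivFinOfCardEq h1).symm
      (Fintype.equivFinOfCardEq h2).symm).trans (Equiv.sumCompl pr),
    fun x => ?_, fun y => ?_⟩
  · simpa using ((Fintype.equivFinOfCardEq h1).symm x).2
  · simpa using ((Fintype.equivFinOfCardEq h2).symm y).2

lemma card_filter_perm {s : ℕ} (σ : Equiv.Perm (Fin s)) (pr : Fin s → Prop)
    [DecidablePred pr] :
    (univ.filter fun j => pr (σ j)).card = (univ.filter pr).card := by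
  rw [← Fintype.card_subtype, ← Fintype.card_subtype]
  exact Fintype.card_congr (σ.subtypeEquiv fun a => Iff.rfl)

lemma card_isLeft_le {s : ℕ} {g : Fin s → Fin m ⊕ Fin q} (hg : Injective g) :
    (univ.filter fun j => (g j).isLeft = true).card ≤ m := by
  rw [← Fintype.card_subtype]
  calc Fintype.card {j // (g j).isLeft = true}
      ≤ Fintype.card (Fin m) := by
        refine Fintype.card_le_of_injective (fun x => (g x.1).getLeft x.2) ?_
        rintro ⟨x, hx⟩ ⟨y, hy⟩ h
        dsimp only at h
        have : g x = g y := by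
          rw [Sum.eq_left_getLeft_of_isLeft hx, Sum.eq_left_getLeft_of_isLeft hy]
          exact congrArg Sum.inl h
        exact Subtype.ext (hg this)
    _ = m := Fintype.card_fin m

lemma card_isRight_le {s : ℕ} {g : Fin s → Fin m ⊕ Fin q} (hg : Injective g) :
    (univ.filter fun j => ¬ (g j).isLeft = true).card ≤ q := by
  rw [← Fintype.card_subtype]
  calc Fintype.card {j // ¬ (g j).isLeft = true}
      ≤ Fintype.card (Fin q) := by
        refine Fintype.card_le_of_injective
          (fun x => (g x.1).getRight (by rw [← Sum.not_isLeft]; exact x.2)) ?_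
        rintro ⟨x, hx⟩ ⟨y, hy⟩ h
        dsimp only at h
        have hx' : (g x).isRight = true := Sum.not_isLeft.mp hx
        have hy' : (g y).isRight = true := Sum.not_isLeft.mp hy
        have : g x = g y := by
          rw [Sum.eq_right_getRight_of_isRight hx', Sum.eq_right_getRight_of_isRight hy']
          exact congrArg Sum.inr h
        exact Subtype.ext (hg this)
    _ = q := Fintype.card_fin q

lemma key_mem (A₁ : Matrix (Fin n) (Fin m) R) (A₂ : Matrix (Fin p) (Fin q) R)
    {s t₁ t₂ : ℕ} (f : Fin s → Fin n ⊕ Fin p) (g : Fin s → Fin m ⊕ Fin q)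
    (hf : Injective f) (hg : Injective g)
    (ht₁ : (univ.filter fun j => (g j).isLeft = true).card = t₁)
    (ht₂ : (univ.filter fun j => ¬ (g j).isLeft = true).card = t₂) :
    ((fromBlocks A₁ 0 0 A₂).submatrix f g).det ∈
      minorsIdeal A₁ t₁ * minorsIdeal A₂ t₂ := by
  classical
  set M := (fromBlocks A₁ 0 0 A₂).submatrix f g with hM
  by_cases hcard : (univ.filter fun i => (f i).isLeft = true).card = t₁
  · have hcard2 : (univ.filter fun i => ¬ (f i).isLeft = true).card = t₂ := by
      have h1 := Finset.card_filter_add_card_filter_not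
        (s := (univ : Finset (Fin s))) (fun i => (f i).isLeft = true)
      have h2 := Finset.card_filter_add_card_filter_not
        (s := (univ : Finset (Fin s))) (fun j => (g j).isLeft = true)
      omega
    obtain ⟨E, hEl, hEr⟩ := split_equiv (fun i => (f i).isLeft = true) hcard hcard2
    obtain ⟨F, hFl, hFr⟩ := split_equiv (fun j => (g j).isLeft = true) ht₁ ht₂
    set f₁ : Fin t₁ → Fin n := fun x => (f (E (Sum.inl x))).getLeft (hEl x) with hf₁def
    set f₂ : Fin t₂ → Fin p := fun y => (f (E (Sum.inr y))).getRight
      (by rw [← Sum.not_isLeft]; exact hEr y) with hf₂def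
    set g₁ : Fin t₁ → Fin m := fun x => (g (F (Sum.inl x))).getLeft (hFl x) with hg₁def
    set g₂ : Fin t₂ → Fin q := fun y => (g (F (Sum.inr y))).getRight
      (by rw [← Sum.not_isLeft]; exact hFr y) with hg₂def
    have hfE : ∀ x, f (E (Sum.inl x)) = Sum.inl (f₁ x) :=
      fun x => Sum.eq_left_getLeft_of_isLeft (hEl x)
    have hfE2 : ∀ y, f (E (Sum.inr y)) = Sum.inr (f₂ y) :=
      fun y => Sum.eq_right_getRight_of_isRight _
    have hgF : ∀ x, g (F (Sum.inl x)) = Sum.inl (g₁ x) :=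
      fun x => Sum.eq_left_getLeft_of_isLeft (hFl x)
    have hgF2 : ∀ y, g (F (Sum.inr y)) = Sum.inr (g₂ y) :=
      fun y => Sum.eq_right_getRight_of_isRight _
    have hf₁ : Injective f₁ := by
      intro x y h
      have : f (E (Sum.inl x)) = f (E (Sum.inl y)) := by rw [hfE x, hfE y, h]
      exact Sum.inl_injective (E.injective (hf this))
    have hf₂ : Injective f₂ := by
      intro x y h
      have : f (E (Sum.inr x)) = f (E (Sum.inr y)) := by rw [hfE2 x, hfE2 y, h]
      exact Sum.inr_injective (E.injective (hf this))
    have hg₁ : Injective g₁ := by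
      intro x y h
      have : g (F (Sum.inl x)) = g (F (Sum.inl y)) := by rw [hgF x, hgF y, h]
      exact Sum.inl_injective (F.injective (hg this))
    have hg₂ : Injective g₂ := by
      intro x y h
      have : g (F (Sum.inr x)) = g (F (Sum.inr y)) := by rw [hgF2 x, hgF2 y, h]
      exact Sum.inr_injective (F.injective (hg this))
    have hN : M.submatrix E F
        = fromBlocks (A₁.submatrix f₁ g₁) 0 0 (A₂.submatrix f₂ g₂) := by
      ext i j
      rcases i with x | y <;> rcases j with u | v <;>
        simp [hM, Matrix.submatrix_apply, hfE, hfE2, hgF, hgF2]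
    have hMF : M.submatrix F F = (M.submatrix E F).submatrix (F.trans E.symm) id := by
      ext i j
      simp [Matrix.submatrix_apply]
    have hdet : M.det = ((Equiv.Perm.sign (F.trans E.symm) : ℤ) : R) *
        ((A₁.submatrix f₁ g₁).det * (A₂.submatrix f₂ g₂).det) := by
      rw [← Matrix.det_submatrix_equiv_self F M, hMF,
        Matrix.det_permute, hN, Matrix.det_fromBlocks_zero₂₁]
    rw [hdet]
    exact Ideal.mul_mem_left _ _
      (Ideal.mul_mem_mul (mem_minorsIdeal A₁ hf₁ hg₁) (mem_minorsIdeal A₂ hf₂ hg₂))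
  · have hz : M.det = 0 := by
      rw [Matrix.det_apply']
      refine Finset.sum_eq_zero fun σ _ => ?_
      rcases em (∀ j, (f (σ j)).isLeft = (g j).isLeft) with hall | hall
      · exfalso
        apply hcard
        calc (univ.filter fun i => (f i).isLeft = true).card
            = (univ.filter fun j => (f (σ j)).isLeft = true).card :=
              (card_filter_perm σ _).symm
          _ = (univ.filter fun j => (g j).isLeft = true).card := by
              refine congrArg Finset.card (Finset.filter_congr fun j _ => ?_)
              rw [hall j]
          _ = t₁ := ht₁
      · push_neg at hall
        obtain ⟨j, hj⟩ := hall
        have hzz : M (σ j) j = 0 := by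
          rcases hfj : f (σ j) with a | a <;> rcases hgj : g j with b | b
          · exact absurd (by simp [hfj, hgj]) hj
          · simp [hM, Matrix.submatrix_apply, hfj, hgj]
          · simp [hM, Matrix.submatrix_apply, hfj, hgj]
          · exact absurd (by simp [hfj, hgj]) hj
        have hprod : ∏ i, M (σ i) i = 0 := Finset.prod_eq_zero (Finset.mem_univ j) hzz
        rw [hprod, mul_zero]
    rw [hz]
    exact Ideal.zero_mem _

end MinorsProof

open MinorsProof in
/-- For a block diagonal matrix `A = diag(A₁, A₂)` with `A₁` of size `n × m`
and `A₂` of size `p × q`, the ideal generated by the `(m+q−1)`-minors of `A`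
equals the sum of the ideal generated by products of `(m−1)`-minors of `A₁`
with `q`-minors of `A₂`, and the ideal generated by products of `m`-minors of
`A₁` with `(q−1)`-minors of `A₂`. -/
theorem stmt6 {R : Type} [CommRing R] {n m p q : ℕ}
    (A₁ : Matrix (Fin n) (Fin m) R) (A₂ : Matrix (Fin p) (Fin q) R) :
    minorsIdeal (Matrix.fromBlocks A₁ 0 0 A₂) (m + q - 1) =
      minorsIdeal A₁ (m - 1) * minorsIdeal A₂ q +
        minorsIdeal A₁ m * minorsIdeal A₂ (q - 1) := by
  classical
  apply le_antisymm
  · rw [show minorsIdeal (Matrix.fromBlocks A₁ 0 0 A₂) (m + q - 1) =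
      Ideal.span {x | ∃ (f : Fin (m + q - 1) → Fin n ⊕ Fin p)
        (g : Fin (m + q - 1) → Fin m ⊕ Fin q),
        Function.Injective f ∧ Function.Injective g ∧
          x = ((Matrix.fromBlocks A₁ 0 0 A₂).submatrix f g).det} from rfl, Ideal.span_le]
    rintro x ⟨f, g, hf, hg, rfl⟩
    set t₁ := (Finset.univ.filter fun j => (g j).isLeft = true).card with hT1
    set t₂ := (Finset.univ.filter fun j => ¬ (g j).isLeft = true).card with hT2
    have hsum : t₁ + t₂ = m + q - 1 := by
      have := Finset.card_filter_add_card_filter_not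
        (s := (Finset.univ : Finset (Fin (m + q - 1)))) (fun j => (g j).isLeft = true)
      simp only [Finset.card_univ, Fintype.card_fin] at this
      exact this
    have h1 : t₁ ≤ m := card_isLeft_le hg
    have h2 : t₂ ≤ q := card_isRight_le hg
    have hmem := key_mem A₁ A₂ f g hf hg hT1.symm hT2.symm
    have hcases : (t₁ = m - 1 ∧ t₂ = q) ∨ (t₁ = m ∧ t₂ = q - 1) := by omega
    rcases hcases with ⟨e1, e2⟩ | ⟨e1, e2⟩
    · rw [e1, e2] at hmem
      exact Ideal.mem_sup_left hmem
    · rw [e1, e2] at hmem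
      exact Ideal.mem_sup_right hmem
  · rw [Submodule.add_eq_sup, sup_le_iff]
    constructor
    · rcases Nat.eq_zero_or_pos m with hm | hm
      · subst hm
        have hq : 0 + q - 1 = q - 1 := by omega
        rw [hq]
        exact le_trans Ideal.mul_le_right
          (le_trans (anti A₂ (Nat.sub_le q 1)) (embed_right A₁ A₂ (q - 1)))
      · rw [show minorsIdeal A₁ (m - 1) =
          Ideal.span {x | ∃ (f : Fin (m - 1) → Fin n) (g : Fin (m - 1) → Fin m),
            Function.Injective f ∧ Function.Injective g ∧
              x = (A₁.submatrix f g).det} from rfl,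
          show minorsIdeal A₂ q =
          Ideal.span {x | ∃ (f : Fin q → Fin p) (g : Fin q → Fin q),
            Function.Injective f ∧ Function.Injective g ∧
              x = (A₂.submatrix f g).det} from rfl,
          Ideal.span_mul_span, Ideal.span_le]
        intro x hx
        rw [Set.mem_mul] at hx
        obtain ⟨y, ⟨f₁, g₁, hf₁, hg₁, rfl⟩, z, ⟨f₂, g₂, hf₂, hg₂, rfl⟩, rfl⟩ := hx
        have := prod_mem A₁ A₂ hf₁ hg₁ hf₂ hg₂
        have hq : m - 1 + q = m + q - 1 := by omega
        rwa [hq] at this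
    · rcases Nat.eq_zero_or_pos q with hq | hq
      · subst hq
        have hm' : m + 0 - 1 = m - 1 := by omega
        rw [hm']
        exact le_trans Ideal.mul_le_left
          (le_trans (anti A₁ (Nat.sub_le m 1)) (embed_left A₁ A₂ (m - 1)))
      · rw [show minorsIdeal A₁ m =
          Ideal.span {x | ∃ (f : Fin m → Fin n) (g : Fin m → Fin m),
            Function.Injective f ∧ Function.Injective g ∧
              x = (A₁.submatrix f g).det} from rfl,
          show minorsIdeal A₂ (q - 1) =
          Ideal.span {x | ∃ (f : Fin (q - 1) → Fin p) (g : Fin (q - 1) → Fin q),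
            Function.Injective f ∧ Function.Injective g ∧
              x = (A₂.submatrix f g).det} from rfl,
          Ideal.span_mul_span, Ideal.span_le]
        intro x hx
        rw [Set.mem_mul] at hx
        obtain ⟨y, ⟨f₁, g₁, hf₁, hg₁, rfl⟩, z, ⟨f₂, g₂, hf₂, hg₂, rfl⟩, rfl⟩ := hx
        have := prod_mem A₁ A₂ hf₁ hg₁ hf₂ hg₂
        have hq' : m + (q - 1) = m + q - 1 := by omega
        rwa [hq'] at this
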